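/- For any n₁, n₂ ∈ ℕ, P^1( Σ_{m=1}^{n₁+n₂} 1{X_m=1} = n₁, Σ_{m=1}^{n₁+n₂} 1{X_m=2} = n₂, X_{n₁+n₂} = 1 ) = Σ_{1 ≤ i ≤ n₁ ∧ n₂} d_{1,1}^{n₁−i} d_{1,2}^{i} · (n₁!/((n₁−i)! i!)) · d_{2,1}^{i} d_{2,2}^{n₂−i} · ((n₂−1)!/((n₂−i)! (i−1)!)). -/

import Mathlib

open MeasureTheory Filter Set

noncomputable section

namespace We2

/-- closed-form sum for paths ending at state 1 -/
def Cf (d : ℕ → ℕ → ℝ) (a b : ℕ) : ℝ :=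
  (if b = 0 then d 1 1 ^ a else 0) +
  ∑ j ∈ Finset.range b,
    d 1 1 ^ (a - (j+1)) * d 1 2 ^ (j+1) * (a.choose (j+1) : ℝ) *
      (d 2 1 ^ (j+1) * d 2 2 ^ (b - (j+1)) * ((b-1).choose j : ℝ))

/-- closed-form sum for paths ending at state 2 -/
def Ct (d : ℕ → ℕ → ℝ) (a b : ℕ) : ℝ :=
  ∑ j ∈ Finset.range b,
    d 1 1 ^ (a - j) * d 1 2 ^ (j+1) * (a.choose j : ℝ) *
      (d 2 1 ^ j * d 2 2 ^ (b - (j+1)) * ((b-1).choose j : ℝ))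

lemma Cf_zero_zero (d : ℕ → ℕ → ℝ) : Cf d 0 0 = 1 := by simp [Cf]

lemma Ct_zero (d : ℕ → ℕ → ℝ) (a : ℕ) : Ct d a 0 = 0 := by simp [Ct]

lemma Cf_zero_succ (d : ℕ → ℕ → ℝ) (b : ℕ) : Cf d 0 (b+1) = 0 := by
  simp [Cf, Nat.choose_eq_zero_of_lt (Nat.succ_pos _)]

lemma Cf_rec (d : ℕ → ℕ → ℝ) (a b : ℕ) :
    Cf d (a+1) b = Cf d a b * d 1 1 + Ct d a b * d 2 1 := by
  unfold Cf Ct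
  rw [add_mul, Finset.sum_mul, Finset.sum_mul, add_assoc, ← Finset.sum_add_distrib]
  congr 1
  · split_ifs with h <;> ring
  · refine Finset.sum_congr rfl fun j hj => ?_
    have hch : ((a+1).choose (j+1) : ℝ) = (a.choose j : ℝ) + (a.choose (j+1) : ℝ) := by
      rw [Nat.choose_succ_succ]; push_cast; ring
    have hsub : a + 1 - (j + 1) = a - j := by omega
    rcases le_or_gt (j+1) a with h | h
    · have : a - j = (a - (j+1)) + 1 := by omega
      rw [hsub, hch, this, pow_succ]
      ring
    · have h0 : a.choose (j+1) = 0 := Nat.choose_eq_zero_of_lt h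
      rw [hsub, hch, h0]
      have : a - j = 0 := by omega
      rw [this]
      have : a - (j+1) = 0 := by omega
      rw [this]
      push_cast
      ring

lemma Ct_rec (d : ℕ → ℕ → ℝ) (a b : ℕ) :
    Ct d a (b+1) = Cf d a b * d 1 2 + Ct d a b * d 2 2 := by
  rcases b with _ | c
  · simp [Ct, Cf]
  · unfold Cf Ct
    rw [Finset.sum_range_succ']
    have e0 : d 1 1 ^ (a - 0) * d 1 2 ^ (0+1) * (a.choose 0 : ℝ) *
        (d 2 1 ^ 0 * d 2 2 ^ (c + 1 + 1 - (0+1)) * ((c+1+1-1).choose 0 : ℝ))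
        = d 1 1 ^ a * d 1 2 * d 2 2 ^ (c+1) := by
      simp
    rw [e0]
    -- RHS second sum: peel first term
    rw [show (∑ j ∈ Finset.range (c+1),
        d 1 1 ^ (a - j) * d 1 2 ^ (j+1) * (a.choose j : ℝ) *
          (d 2 1 ^ j * d 2 2 ^ (c + 1 - (j+1)) * ((c+1-1).choose j : ℝ))) * d 2 2
        = ∑ j ∈ Finset.range (c+1),
        (d 1 1 ^ (a - j) * d 1 2 ^ (j+1) * (a.choose j : ℝ) *
          (d 2 1 ^ j * d 2 2 ^ (c + 1 - (j+1)) * ((c+1-1).choose j : ℝ))) * d 2 2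
      from Finset.sum_mul _ _ _]
    rw [Finset.sum_range_succ' (fun j => (d 1 1 ^ (a - j) * d 1 2 ^ (j+1) * (a.choose j : ℝ) *
          (d 2 1 ^ j * d 2 2 ^ (c + 1 - (j+1)) * ((c+1-1).choose j : ℝ))) * d 2 2)]
    have e1 : (d 1 1 ^ (a - 0) * d 1 2 ^ (0+1) * (a.choose 0 : ℝ) *
          (d 2 1 ^ 0 * d 2 2 ^ (c + 1 - (0+1)) * ((c+1-1).choose 0 : ℝ))) * d 2 2
        = d 1 1 ^ a * d 1 2 * d 2 2 ^ (c+1) := by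
      simp [pow_succ]; ring
    rw [e1]
    rw [if_neg (Nat.succ_ne_zero c)]
    rw [zero_add, Finset.sum_mul]
    have hext : (∑ k ∈ Finset.range c,
        d 1 1 ^ (a - (k + 1)) * d 1 2 ^ (k + 1 + 1) * (a.choose (k + 1) : ℝ) *
            (d 2 1 ^ (k + 1) * d 2 2 ^ (c + 1 - (k + 1 + 1)) * ((c + 1 - 1).choose (k + 1) : ℝ)) *
          d 2 2)
        = ∑ k ∈ Finset.range (c+1),
        d 1 1 ^ (a - (k + 1)) * d 1 2 ^ (k + 1 + 1) * (a.choose (k + 1) : ℝ) *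
            (d 2 1 ^ (k + 1) * d 2 2 ^ (c + 1 - (k + 1 + 1)) * ((c + 1 - 1).choose (k + 1) : ℝ)) *
          d 2 2 := by
      rw [Finset.sum_range_succ]
      have : (c + 1 - 1).choose (c + 1) = 0 := by
        apply Nat.choose_eq_zero_of_lt; omega
      rw [this]
      push_cast
      ring
    rw [hext, ← add_assoc, ← Finset.sum_add_distrib]
    have main : ∀ k ∈ Finset.range (c+1),
        d 1 1 ^ (a - (k + 1)) * d 1 2 ^ (k + 1 + 1) * (a.choose (k + 1) : ℝ) *
          (d 2 1 ^ (k + 1) * d 2 2 ^ (c + 1 + 1 - (k + 1 + 1)) * ((c + 1 + 1 - 1).choose (k + 1) : ℝ))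
        = d 1 1 ^ (a - (k + 1)) * d 1 2 ^ (k + 1) * (a.choose (k + 1) : ℝ) *
              (d 2 1 ^ (k + 1) * d 2 2 ^ (c + 1 - (k + 1)) * ((c + 1 - 1).choose k : ℝ)) * d 1 2
          + d 1 1 ^ (a - (k + 1)) * d 1 2 ^ (k + 1 + 1) * (a.choose (k + 1) : ℝ) *
              (d 2 1 ^ (k + 1) * d 2 2 ^ (c + 1 - (k + 1 + 1)) * ((c + 1 - 1).choose (k + 1) : ℝ)) * d 2 2 := by
      intro k hk
      have hk' : k < c + 1 := Finset.mem_range.mp hk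
      have hch : ((c+1+1-1).choose (k+1) : ℝ)
          = ((c+1-1).choose k : ℝ) + ((c+1-1).choose (k+1) : ℝ) := by
        have h1 : c + 1 + 1 - 1 = c + 1 := by omega
        have h2 : c + 1 - 1 = c := by omega
        rw [h1, h2, Nat.choose_succ_succ]; push_cast; ring
      rw [hch]
      rcases le_or_gt (k+1) c with h | h
      · have h3 : c + 1 + 1 - (k + 1 + 1) = (c - (k+1)) + 1 := by omega
        have h4 : c + 1 - (k + 1) = (c - (k+1)) + 1 := by omega
        have h5 : c + 1 - (k + 1 + 1) = c - (k+1) := by omega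
        rw [h3, h4, h5, pow_succ, pow_succ]
        ring
      · have h0 : (c+1-1).choose (k+1) = 0 := by
          apply Nat.choose_eq_zero_of_lt; omega
        rw [h0]
        have h3 : c + 1 + 1 - (k + 1 + 1) = 0 := by omega
        have h4 : c + 1 - (k + 1) = 0 := by omega
        have h5 : c + 1 - (k + 1 + 1) = 0 := by omega
        rw [h3, h4, h5]
        push_cast
        ring
    rw [Finset.sum_congr rfl main]

/-- the weight of a path -/
def wgt (d : ℕ → ℕ → ℝ) {n : ℕ} (v : Fin (n+1) → Fin 3) : ℝ :=
  ∏ k : Fin n, d ((v k.castSucc : ℕ) + 1) ((v k.succ : ℕ) + 1)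

/-- paths of length `n` starting at state `0`, with `a` visits to `0`, `b` visits to `1`
(among positions `1..n`), ending at `e` -/
def G (n a b : ℕ) (e : Fin 3) : Finset (Fin (n+1) → Fin 3) :=
  Finset.univ.filter (fun v => v 0 = 0 ∧
    (∑ k : Fin n, if v k.succ = 0 then 1 else 0) = a ∧
    (∑ k : Fin n, if v k.succ = 1 then 1 else 0) = b ∧
    v (Fin.last n) = e)

lemma mem_G {n a b : ℕ} {e : Fin 3} {v : Fin (n+1) → Fin 3} :
    v ∈ G n a b e ↔ (v 0 = 0 ∧
    (∑ k : Fin n, if v k.succ = 0 then 1 else 0) = a ∧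
    (∑ k : Fin n, if v k.succ = 1 then 1 else 0) = b ∧
    v (Fin.last n) = e) := by
  simp [G]

lemma cnt_split {n : ℕ} (g : Fin 3 → ℕ) (v : Fin (n+2) → Fin 3) :
    ∑ k : Fin (n+1), g (v k.succ) =
      (∑ k : Fin n, g (Fin.init v k.succ)) + g (v (Fin.last (n+1))) := by
  rw [Fin.sum_univ_castSucc]
  congr 1

lemma wgt_split (d : ℕ → ℕ → ℝ) {n : ℕ} (v : Fin (n+2) → Fin 3) :
    wgt d v = wgt d (Fin.init v) *
      d ((Fin.init v (Fin.last n) : ℕ) + 1) ((v (Fin.last (n+1)) : ℕ) + 1) := by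
  unfold wgt
  rw [Fin.prod_univ_castSucc]
  congr 1

/-- if the visit counts fill up all positions, the path never visits state `2` -/
lemma no_two {n a b : ℕ} {u : Fin (n+1) → Fin 3}
    (ha : (∑ k : Fin n, if u k.succ = 0 then 1 else 0) = a)
    (hb : (∑ k : Fin n, if u k.succ = 1 then 1 else 0) = b)
    (hab : a + b = n) (k : Fin n) : u k.succ = 0 ∨ u k.succ = 1 := by
  have hle : ∀ j ∈ Finset.univ (α := Fin n),
      ((if u j.succ = 0 then 1 else 0) + (if u j.succ = 1 then 1 else 0)) ≤ (1 : ℕ) := by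
    intro j _
    split_ifs with h1 h2 <;> simp_all
  have hsum : (∑ j : Fin n, ((if u j.succ = 0 then 1 else 0) + (if u j.succ = 1 then 1 else 0)))
      = ∑ _j : Fin n, (1 : ℕ) := by
    rw [Finset.sum_add_distrib, ha, hb]
    simp [hab]
  have := (Finset.sum_eq_sum_iff_of_le hle).mp hsum k (Finset.mem_univ k)
  by_contra hc
  push_neg at hc
  rw [if_neg hc.1, if_neg hc.2] at this
  simp at this

lemma last_01 {n a b : ℕ} {u : Fin (n+1) → Fin 3} (h0 : u 0 = 0)
    (ha : (∑ k : Fin n, if u k.succ = 0 then 1 else 0) = a)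
    (hb : (∑ k : Fin n, if u k.succ = 1 then 1 else 0) = b)
    (hab : a + b = n) : u (Fin.last n) = 0 ∨ u (Fin.last n) = 1 := by
  rcases n with _ | m
  · left; exact h0
  · have : Fin.last (m+1) = (Fin.last m).succ := (Fin.succ_last m).symm
    rw [this]
    exact no_two ha hb hab (Fin.last m)

lemma G_disj {n a b : ℕ} : Disjoint (G n a b 0) (G n a b 1) := by
  rw [Finset.disjoint_left]
  intro v h0 h1
  have e0 := (mem_G.mp h0).2.2.2
  have e1 := (mem_G.mp h1).2.2.2
  rw [e0] at e1
  exact absurd e1 (by decide)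

lemma init_zero {n : ℕ} (v : Fin (n+2) → Fin 3) : Fin.init v 0 = v 0 := by
  have : Fin.init v 0 = v (Fin.castSucc 0) := rfl
  rw [this, Fin.castSucc_zero]

lemma snoc_zero {n : ℕ} (u : Fin (n+1) → Fin 3) (x : Fin 3) :
    (Fin.snoc u x : Fin (n+2) → Fin 3) 0 = u 0 := by
  have h := Fin.snoc_castSucc (α := fun _ : Fin (n+2) => Fin 3) (x := x) (p := u) (i := (0 : Fin (n+1)))
  rwa [Fin.castSucc_zero] at h

lemma step_sum (d : ℕ → ℕ → ℝ) (n a b : ℕ) (x : Fin 3) (hab : a + b = n) :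
    (∑ v ∈ G (n+1) (a + if x = 0 then 1 else 0) (b + if x = 1 then 1 else 0) x, wgt d v)
      = ∑ u ∈ G n a b 0 ∪ G n a b 1, wgt d u * d ((u (Fin.last n) : ℕ) + 1) ((x : ℕ) + 1) := by
  refine Finset.sum_nbij' (fun v => Fin.init v) (fun u => Fin.snoc u x) ?_ ?_ ?_ ?_ ?_
  · intro v hv
    obtain ⟨h0, hc0, hc1, hl⟩ := mem_G.mp hv
    rw [cnt_split (fun s => if s = 0 then 1 else 0) v, hl] at hc0
    rw [cnt_split (fun s => if s = 1 then 1 else 0) v, hl] at hc1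
    have hc0' : (∑ k : Fin n, if Fin.init v k.succ = 0 then 1 else 0) = a := by omega
    have hc1' : (∑ k : Fin n, if Fin.init v k.succ = 1 then 1 else 0) = b := by omega
    have h0' : Fin.init v 0 = 0 := by rw [init_zero]; exact h0
    rcases last_01 h0' hc0' hc1' hab with hl' | hl'
    · exact Finset.mem_union_left _ (mem_G.mpr ⟨h0', hc0', hc1', hl'⟩)
    · exact Finset.mem_union_right _ (mem_G.mpr ⟨h0', hc0', hc1', hl'⟩)
  · intro u hu
    have hu' : u ∈ G n a b 0 ∨ u ∈ G n a b 1 := Finset.mem_union.mp hu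
    have hcond : u 0 = 0 ∧ (∑ k : Fin n, if u k.succ = 0 then 1 else 0) = a ∧
        (∑ k : Fin n, if u k.succ = 1 then 1 else 0) = b := by
      rcases hu' with h | h <;>
        exact ⟨(mem_G.mp h).1, (mem_G.mp h).2.1, (mem_G.mp h).2.2.1⟩
    have hmem : Fin.snoc u x ∈ G (n+1) (a + if x = 0 then 1 else 0)
        (b + if x = 1 then 1 else 0) x := by
      refine mem_G.mpr ⟨?_, ?_, ?_, ?_⟩
      · rw [snoc_zero]; exact hcond.1
      · rw [cnt_split (fun s => if s = 0 then 1 else 0) (Fin.snoc u x),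
          Fin.init_snoc, Fin.snoc_last, hcond.2.1]
      · rw [cnt_split (fun s => if s = 1 then 1 else 0) (Fin.snoc u x),
          Fin.init_snoc, Fin.snoc_last, hcond.2.2]
      · exact Fin.snoc_last _ _
    exact hmem
  · intro v hv
    have hl := (mem_G.mp hv).2.2.2
    show Fin.snoc (Fin.init v) x = v
    rw [← hl]
    exact Fin.snoc_init_self v
  · intro u hu
    exact Fin.init_snoc _ _
  · intro v hv
    have hl := (mem_G.mp hv).2.2.2
    show wgt d v = wgt d (Fin.init v) * d ((Fin.init v (Fin.last n) : ℕ) + 1) ((x : ℕ) + 1)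
    rw [wgt_split d v, hl]

lemma key (d : ℕ → ℕ → ℝ) :
    ∀ n a b : ℕ, ∀ e : Fin 3, a + b = n → e ≠ 2 →
    (∑ v ∈ G n a b e, wgt d v) = if e = 0 then Cf d a b else Ct d a b := by
  intro n
  induction n with
  | zero =>
    intro a b e hab he
    obtain ⟨rfl, rfl⟩ : a = 0 ∧ b = 0 := by omega
    have hval : ∀ v : Fin 1 → Fin 3, wgt d v = 1 := by
      intro v; unfold wgt; simp
    rcases show e = 0 ∨ e = 1 by omega with rfl | rfl
    · have hG : G 0 0 0 (0 : Fin 3) = {fun _ => (0 : Fin 3)} := by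
        apply Finset.ext
        intro v
        rw [mem_G, Finset.mem_singleton]
        constructor
        · rintro ⟨h0, -, -, -⟩
          funext k
          have : k = 0 := Fin.ext (by omega)
          rw [this, h0]
        · rintro rfl
          exact ⟨rfl, rfl, rfl, rfl⟩
      rw [hG, Finset.sum_singleton, hval, if_pos rfl, Cf_zero_zero]
    · have hG : G 0 0 0 (1 : Fin 3) = ∅ := by
        apply Finset.eq_empty_of_forall_notMem
        intro v hv
        obtain ⟨h0, -, -, hl⟩ := mem_G.mp hv
        have : Fin.last 0 = 0 := rfl
        rw [this, h0] at hl
        exact absurd hl (by decide)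
      rw [hG, Finset.sum_empty, if_neg (by decide), Ct_zero]
  | succ n IH =>
    intro a b e hab he
    rcases show e = 0 ∨ e = 1 by omega with rfl | rfl
    · -- ends at state 0 ("1")
      rcases a with _ | a'
      · have hG : G (n+1) 0 b (0 : Fin 3) = ∅ := by
          apply Finset.eq_empty_of_forall_notMem
          intro v hv
          obtain ⟨h0, hc0, hc1, hl⟩ := mem_G.mp hv
          rw [cnt_split (fun s => if s = 0 then 1 else 0) v, hl] at hc0
          simp at hc0
        rw [hG, Finset.sum_empty, if_pos rfl]
        obtain rfl : b = n + 1 := by omega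
        rw [Cf_zero_succ]
      · rw [if_pos rfl, Cf_rec]
        have hstep := step_sum d n a' b 0 (by omega)
        simp only [if_pos rfl] at hstep
        rw [show a' + 1 = a' + (if (0 : Fin 3) = 0 then 1 else 0) by simp,
          show b = b + (if (0 : Fin 3) = 1 then 1 else 0) by simp]
        rw [step_sum d n a' b 0 (by omega), Finset.sum_union G_disj]
        have h1 : (∑ u ∈ G n a' b (0 : Fin 3), wgt d u * d ((u (Fin.last n) : ℕ) + 1) (((0 : Fin 3) : ℕ) + 1))
            = (∑ u ∈ G n a' b (0 : Fin 3), wgt d u) * d 1 1 := by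
          rw [Finset.sum_mul]
          refine Finset.sum_congr rfl fun u hu => ?_
          rw [(mem_G.mp hu).2.2.2]
          norm_num
        have h2 : (∑ u ∈ G n a' b (1 : Fin 3), wgt d u * d ((u (Fin.last n) : ℕ) + 1) (((0 : Fin 3) : ℕ) + 1))
            = (∑ u ∈ G n a' b (1 : Fin 3), wgt d u) * d 2 1 := by
          rw [Finset.sum_mul]
          refine Finset.sum_congr rfl fun u hu => ?_
          rw [(mem_G.mp hu).2.2.2]
          norm_num
        rw [h1, h2, IH a' b 0 (by omega) (by decide), IH a' b 1 (by omega) (by decide)]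
        norm_num
    · -- ends at state 1 ("2")
      rcases b with _ | b'
      · have hG : G (n+1) a 0 (1 : Fin 3) = ∅ := by
          apply Finset.eq_empty_of_forall_notMem
          intro v hv
          obtain ⟨h0, hc0, hc1, hl⟩ := mem_G.mp hv
          rw [cnt_split (fun s => if s = 1 then 1 else 0) v, hl] at hc1
          simp at hc1
        rw [hG, Finset.sum_empty, if_neg (by decide), Ct_zero]
      · rw [if_neg (by decide), Ct_rec]
        rw [show a = a + (if (1 : Fin 3) = 0 then 1 else 0) by simp,
          show b' + 1 = b' + (if (1 : Fin 3) = 1 then 1 else 0) by simp]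
        rw [step_sum d n a b' 1 (by omega), Finset.sum_union G_disj]
        have h1 : (∑ u ∈ G n a b' (0 : Fin 3), wgt d u * d ((u (Fin.last n) : ℕ) + 1) (((1 : Fin 3) : ℕ) + 1))
            = (∑ u ∈ G n a b' (0 : Fin 3), wgt d u) * d 1 2 := by
          rw [Finset.sum_mul]
          refine Finset.sum_congr rfl fun u hu => ?_
          rw [(mem_G.mp hu).2.2.2]
          norm_num
        have h2 : (∑ u ∈ G n a b' (1 : Fin 3), wgt d u * d ((u (Fin.last n) : ℕ) + 1) (((1 : Fin 3) : ℕ) + 1))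
            = (∑ u ∈ G n a b' (1 : Fin 3), wgt d u) * d 2 2 := by
          rw [Finset.sum_mul]
          refine Finset.sum_congr rfl fun u hu => ?_
          rw [(mem_G.mp hu).2.2.2]
          norm_num
        rw [h1, h2, IH a b' 0 (by omega) (by decide), IH a b' 1 (by omega) (by decide)]
        norm_num



lemma Cf_eq_rhs (d : ℕ → ℕ → ℝ) (n₁ n₂ : ℕ) (hn₁ : 1 ≤ n₁) (hn₂ : 1 ≤ n₂) :
    Cf d n₁ n₂ = ∑ i ∈ Finset.Icc 1 (min n₁ n₂),
        d 1 1 ^ (n₁ - i) * d 1 2 ^ i *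
          ((n₁.factorial : ℝ) / ((n₁ - i).factorial * i.factorial)) *
        (d 2 1 ^ i * d 2 2 ^ (n₂ - i) *
          (((n₂ - 1).factorial : ℝ) / ((n₂ - i).factorial * (i - 1).factorial))) := by
  have h1 : ∀ i ∈ Finset.Icc 1 (min n₁ n₂),
      d 1 1 ^ (n₁ - i) * d 1 2 ^ i *
          ((n₁.factorial : ℝ) / ((n₁ - i).factorial * i.factorial)) *
        (d 2 1 ^ i * d 2 2 ^ (n₂ - i) *
          (((n₂ - 1).factorial : ℝ) / ((n₂ - i).factorial * (i - 1).factorial)))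
      = d 1 1 ^ (n₁ - i) * d 1 2 ^ i * (n₁.choose i : ℝ) *
        (d 2 1 ^ i * d 2 2 ^ (n₂ - i) * ((n₂-1).choose (i-1) : ℝ)) := by
    intro i hi
    obtain ⟨hi1, hi2⟩ := Finset.mem_Icc.mp hi
    have hin1 : i ≤ n₁ := le_trans hi2 (min_le_left _ _)
    have hin2 : i ≤ n₂ := le_trans hi2 (min_le_right _ _)
    rw [Nat.cast_choose ℝ hin1, Nat.cast_choose ℝ (show i - 1 ≤ n₂ - 1 by omega)]
    have e1 : n₂ - 1 - (i - 1) = n₂ - i := by omega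
    rw [e1, mul_comm ((i:ℕ).factorial : ℝ) (((n₁ - i).factorial : ℝ)),
      mul_comm (((i:ℕ) - 1).factorial : ℝ) (((n₂ - i).factorial : ℝ))]
  rw [Finset.sum_congr rfl h1]
  have h2 : (∑ i ∈ Finset.Icc 1 (min n₁ n₂),
      d 1 1 ^ (n₁ - i) * d 1 2 ^ i * (n₁.choose i : ℝ) *
        (d 2 1 ^ i * d 2 2 ^ (n₂ - i) * ((n₂-1).choose (i-1) : ℝ)))
      = ∑ i ∈ Finset.Icc 1 n₂,
      d 1 1 ^ (n₁ - i) * d 1 2 ^ i * (n₁.choose i : ℝ) *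
        (d 2 1 ^ i * d 2 2 ^ (n₂ - i) * ((n₂-1).choose (i-1) : ℝ)) := by
    refine Finset.sum_subset ?_ ?_
    · intro i hi
      obtain ⟨hi1, hi2⟩ := Finset.mem_Icc.mp hi
      exact Finset.mem_Icc.mpr ⟨hi1, le_trans hi2 (min_le_right _ _)⟩
    · intro i hi hni
      obtain ⟨hi1, hi2⟩ := Finset.mem_Icc.mp hi
      have : n₁ < i := by
        rcases Finset.mem_Icc.not.mp hni with h
        push_neg at h
        have := h hi1
        omega
      rw [Nat.choose_eq_zero_of_lt this]
      push_cast
      ring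
  rw [h2]
  have h3 : (∑ i ∈ Finset.Icc 1 n₂,
      d 1 1 ^ (n₁ - i) * d 1 2 ^ i * (n₁.choose i : ℝ) *
        (d 2 1 ^ i * d 2 2 ^ (n₂ - i) * ((n₂-1).choose (i-1) : ℝ)))
      = ∑ j ∈ Finset.range n₂,
      d 1 1 ^ (n₁ - (j+1)) * d 1 2 ^ (j+1) * (n₁.choose (j+1) : ℝ) *
        (d 2 1 ^ (j+1) * d 2 2 ^ (n₂ - (j+1)) * ((n₂-1).choose j : ℝ)) := by
    rw [show Finset.Icc 1 n₂ = Finset.Ico 1 (n₂+1) from by rw [Finset.Ico_add_one_right_eq_Icc],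
      Finset.sum_Ico_eq_sum_range, Nat.add_sub_cancel]
    refine Finset.sum_congr rfl fun j hj => ?_
    have e : 1 + j = j + 1 := by omega
    rw [e]
    norm_num
  rw [Cf]
  rw [if_neg (by omega)]
  rw [zero_add, h3]



/-- extend a `Fin`-indexed path (with states `0,1,2`) to `ℕ` (with states `1,2,3`) -/
def tf (n : ℕ) (v : Fin (n+1) → Fin 3) (k : ℕ) : ℕ :=
  if h : k < n + 1 then ((v ⟨k, h⟩ : ℕ) + 1) else 1

lemma tf_lt (n : ℕ) (v : Fin (n+1) → Fin 3) (k : ℕ) (h : k < n+1) :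
    tf n v k = (v ⟨k, h⟩ : ℕ) + 1 := dif_pos h

lemma tf_mem (n : ℕ) (v : Fin (n+1) → Fin 3) (k : ℕ) : tf n v k ∈ ({1,2,3} : Set ℕ) := by
  by_cases h : k < n + 1
  · rw [tf_lt n v k h]
    have := (v ⟨k, h⟩).isLt
    simp only [Set.mem_insert_iff, Set.mem_singleton_iff]
    omega
  · rw [tf, dif_neg h]
    simp

lemma cnt_tf_one (n : ℕ) (v : Fin (n+1) → Fin 3) :
    (∑ m ∈ Finset.Icc 1 n, if tf n v m = 1 then 1 else 0)
      = ∑ k : Fin n, if v k.succ = 0 then 1 else 0 := by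
  rw [show Finset.Icc 1 n = Finset.Ico 1 (n+1) from by rw [Finset.Ico_add_one_right_eq_Icc],
    Finset.sum_Ico_eq_sum_range, Nat.add_sub_cancel,
    ← Fin.sum_univ_eq_sum_range (fun j => if tf n v (1 + j) = 1 then 1 else 0) n]
  refine Finset.sum_congr rfl fun k _ => ?_
  rw [tf_lt n v (1 + k.val) (by omega)]
  have hk : (⟨1 + k.val, by omega⟩ : Fin (n+1)) = k.succ := by
    apply Fin.ext
    simp [Nat.add_comm]
  rw [hk]
  have hiff : ((v k.succ : ℕ) + 1 = 1) ↔ (v k.succ = 0) := by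
    rw [Fin.ext_iff]
    simp
  rw [if_congr hiff rfl rfl]

lemma cnt_tf_two (n : ℕ) (v : Fin (n+1) → Fin 3) :
    (∑ m ∈ Finset.Icc 1 n, if tf n v m = 2 then 1 else 0)
      = ∑ k : Fin n, if v k.succ = 1 then 1 else 0 := by
  rw [show Finset.Icc 1 n = Finset.Ico 1 (n+1) from by rw [Finset.Ico_add_one_right_eq_Icc],
    Finset.sum_Ico_eq_sum_range, Nat.add_sub_cancel,
    ← Fin.sum_univ_eq_sum_range (fun j => if tf n v (1 + j) = 2 then 1 else 0) n]
  refine Finset.sum_congr rfl fun k _ => ?_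
  rw [tf_lt n v (1 + k.val) (by omega)]
  have hk : (⟨1 + k.val, by omega⟩ : Fin (n+1)) = k.succ := by
    apply Fin.ext
    simp [Nat.add_comm]
  rw [hk]
  have hiff : ((v k.succ : ℕ) + 1 = 2) ↔ (v k.succ = 1) := by
    rw [Fin.ext_iff]
    simp
  rw [if_congr hiff rfl rfl]

lemma tf_last (n : ℕ) (v : Fin (n+1) → Fin 3) : tf n v n = (v (Fin.last n) : ℕ) + 1 :=
  tf_lt n v n (by omega)

lemma tf_last_iff (n : ℕ) (v : Fin (n+1) → Fin 3) : tf n v n = 1 ↔ v (Fin.last n) = 0 := by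
  rw [tf_last, Fin.ext_iff]
  simp

lemma tf_zero_iff (n : ℕ) (v : Fin (n+1) → Fin 3) : tf n v 0 = 1 ↔ v 0 = 0 := by
  rw [tf_lt n v 0 (by omega)]
  have : (⟨0, by omega⟩ : Fin (n+1)) = 0 := by
    apply Fin.ext
    simp
  rw [this, Fin.ext_iff]
  simp

lemma prod_tf (d : ℕ → ℕ → ℝ) (n : ℕ) (v : Fin (n+1) → Fin 3) :
    (∏ k ∈ Finset.range n, d (tf n v k) (tf n v (k+1))) = wgt d v := by
  rw [← Fin.prod_univ_eq_prod_range (fun j => d (tf n v j) (tf n v (j+1))) n]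
  refine Finset.prod_congr rfl fun k _ => ?_
  rw [tf_lt n v k.val (by omega), tf_lt n v (k.val + 1) (by omega)]
  have h1 : (⟨k.val, by omega⟩ : Fin (n+1)) = k.castSucc := by
    apply Fin.ext
    simp
  have h2 : (⟨k.val + 1, by omega⟩ : Fin (n+1)) = k.succ := by
    apply Fin.ext
    simp
  rw [h1, h2]



end We2

open We2

/-- **Combinatorial Markov chain identity (we2)**: for a time-homogeneous Markov chain
`X` on the state space `{1,2,3}` with transition probabilities `d i l`, started at `1`,
and any `n₁, n₂ ≥ 1`,
`P¹(∑_{m=1}^{n₁+n₂} 1{X_m=1} = n₁, ∑_{m=1}^{n₁+n₂} 1{X_m=2} = n₂, X_{n₁+n₂} = 1)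
  = ∑_{1 ≤ i ≤ n₁ ∧ n₂} d₁₁^{n₁-i} d₁₂^i (n₁!/((n₁-i)! i!))
      d₂₁^i d₂₂^{n₂-i} ((n₂-1)!/((n₂-i)! (i-1)!))`. -/
theorem markov_chain_visits_end_at_one {Ω : Type*} [MeasurableSpace Ω]
    (μ : Measure Ω) [IsProbabilityMeasure μ]
    (X : ℕ → Ω → ℕ) (hX : ∀ m, Measurable (X m))
    (d : ℕ → ℕ → ℝ) (hd0 : ∀ i l, 0 ≤ d i l)
    (hdsum : ∀ i ∈ ({1, 2, 3} : Set ℕ), d i 1 + d i 2 + d i 3 = 1)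
    (hrange : ∀ m ω, X m ω ∈ ({1, 2, 3} : Set ℕ))
    -- the law of `X` is that of the Markov chain with transition matrix `d` started at `1`
    (hpath : ∀ (m : ℕ) (f : ℕ → ℕ), (∀ k, f k ∈ ({1, 2, 3} : Set ℕ)) →
      μ {ω | ∀ k ≤ m, X k ω = f k} =
        ENNReal.ofReal (if f 0 = 1 then ∏ k ∈ Finset.range m, d (f k) (f (k + 1)) else 0))
    (n₁ n₂ : ℕ) (hn₁ : 1 ≤ n₁) (hn₂ : 1 ≤ n₂) :
    (μ {ω | (∑ m ∈ Finset.Icc 1 (n₁ + n₂), if X m ω = 1 then 1 else 0) = n₁ ∧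
            (∑ m ∈ Finset.Icc 1 (n₁ + n₂), if X m ω = 2 then 1 else 0) = n₂ ∧
            X (n₁ + n₂) ω = 1}).toReal =
      ∑ i ∈ Finset.Icc 1 (min n₁ n₂),
        d 1 1 ^ (n₁ - i) * d 1 2 ^ i *
          ((n₁.factorial : ℝ) / ((n₁ - i).factorial * i.factorial)) *
        (d 2 1 ^ i * d 2 2 ^ (n₂ - i) *
          (((n₂ - 1).factorial : ℝ) / ((n₂ - i).factorial * (i - 1).factorial))) := by
  classical
  set n := n₁ + n₂ with hn
  set C : (Fin (n+1) → Fin 3) → Set Ω :=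
    (fun v => {ω | ∀ k ≤ n, X k ω = tf n v k}) with hC
  set good : Finset (Fin (n+1) → Fin 3) := Finset.univ.filter (fun v =>
    (∑ m ∈ Finset.Icc 1 n, if tf n v m = 1 then 1 else 0) = n₁ ∧
    (∑ m ∈ Finset.Icc 1 n, if tf n v m = 2 then 1 else 0) = n₂ ∧ tf n v n = 1) with hgood
  have hX1 : ∀ m ω, 1 ≤ X m ω ∧ X m ω ≤ 3 := by
    intro m ω
    have := hrange m ω
    simp only [Set.mem_insert_iff, Set.mem_singleton_iff] at this
    omega
  -- the event is a disjoint union of cylinders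
  have hE : {ω | (∑ m ∈ Finset.Icc 1 n, if X m ω = 1 then 1 else 0) = n₁ ∧
            (∑ m ∈ Finset.Icc 1 n, if X m ω = 2 then 1 else 0) = n₂ ∧
            X n ω = 1} = ⋃ v ∈ good, C v := by
    ext ω
    simp only [Set.mem_setOf_eq, Set.mem_iUnion, exists_prop]
    constructor
    · rintro ⟨hA, hB, hCend⟩
      refine ⟨fun k => ⟨X k.val ω - 1, by have := hX1 k.val ω; omega⟩, ?_, ?_⟩
      · rw [hgood, Finset.mem_filter]
        refine ⟨Finset.mem_univ _, ?_, ?_, ?_⟩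
        · refine Eq.trans ?_ hA
          refine Finset.sum_congr rfl fun m hm => ?_
          have hm' : m ≤ n := (Finset.mem_Icc.mp hm).2
          rw [tf_lt n _ m (by omega)]
          have hx := hX1 m ω
          have hiff : ((X m ω - 1) + 1 = 1) ↔ (X m ω = 1) := by omega
          exact if_congr hiff rfl rfl
        · refine Eq.trans ?_ hB
          refine Finset.sum_congr rfl fun m hm => ?_
          have hm' : m ≤ n := (Finset.mem_Icc.mp hm).2
          rw [tf_lt n _ m (by omega)]
          have hx := hX1 m ω
          have hiff : ((X m ω - 1) + 1 = 2) ↔ (X m ω = 2) := by omega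
          exact if_congr hiff rfl rfl
        · rw [tf_lt n _ n (by omega)]
          show (X n ω - 1) + 1 = 1
          have := hX1 n ω
          omega
      · simp only [hC, Set.mem_setOf_eq]
        intro k hk
        rw [tf_lt n _ k (by omega)]
        show X k ω = (X k ω - 1) + 1
        have := hX1 k ω
        omega
    · rintro ⟨v, hvgood, hωC⟩
      rw [hgood, Finset.mem_filter] at hvgood
      obtain ⟨-, hA, hB, hCend⟩ := hvgood
      simp only [hC, Set.mem_setOf_eq] at hωC
      refine ⟨?_, ?_, ?_⟩
      · rw [← hA]
        refine Finset.sum_congr rfl fun m hm => ?_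
        rw [hωC m (Finset.mem_Icc.mp hm).2]
      · rw [← hB]
        refine Finset.sum_congr rfl fun m hm => ?_
        rw [hωC m (Finset.mem_Icc.mp hm).2]
      · rw [hωC n le_rfl, hCend]
  have hmeas : ∀ v : Fin (n+1) → Fin 3, MeasurableSet (C v) := by
    intro v
    have : C v = ⋂ (k : ℕ), ⋂ (_ : k ≤ n), (X k) ⁻¹' {tf n v k} := by
      ext ω
      simp [hC, Set.mem_iInter]
    rw [this]
    exact MeasurableSet.iInter fun k => MeasurableSet.iInter fun _ =>
      hX k (measurableSet_singleton _)
  have hdisj : (↑good : Set (Fin (n+1) → Fin 3)).PairwiseDisjoint C := by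
    intro v _ w _ hvw
    refine Set.disjoint_left.mpr fun {ω} hv' hw' => hvw ?_
    simp only [hC, Set.mem_setOf_eq] at hv' hw'
    funext k
    have h1 := hv' k.val (by omega)
    have h2 := hw' k.val (by omega)
    rw [tf_lt n v k.val k.isLt] at h1
    rw [tf_lt n w k.val k.isLt] at h2
    have : (v ⟨k.val, k.isLt⟩ : ℕ) = (w ⟨k.val, k.isLt⟩ : ℕ) := by omega
    have heq : v ⟨k.val, k.isLt⟩ = w ⟨k.val, k.isLt⟩ := Fin.ext this
    have hk : (⟨k.val, k.isLt⟩ : Fin (n+1)) = k := Fin.ext rfl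
    rwa [hk] at heq
  have hμC : ∀ v : Fin (n+1) → Fin 3, μ (C v) = ENNReal.ofReal
      (if tf n v 0 = 1 then ∏ k ∈ Finset.range n, d (tf n v k) (tf n v (k+1)) else 0) :=
    fun v => hpath n (tf n v) (tf_mem n v)
  have hW0 : ∀ v ∈ good, 0 ≤
      (if tf n v 0 = 1 then ∏ k ∈ Finset.range n, d (tf n v k) (tf n v (k+1)) else 0) := by
    intro v _
    split_ifs
    · exact Finset.prod_nonneg fun k _ => hd0 _ _
    · exact le_refl 0
  rw [hE, measure_biUnion_finset hdisj (fun v _ => hmeas v),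
    Finset.sum_congr rfl (fun v _ => hμC v),
    ← ENNReal.ofReal_sum_of_nonneg hW0,
    ENNReal.toReal_ofReal (Finset.sum_nonneg hW0)]
  -- now a purely real/combinatorial identity
  have hstep1 : (∑ v ∈ good,
      (if tf n v 0 = 1 then ∏ k ∈ Finset.range n, d (tf n v k) (tf n v (k+1)) else 0))
      = ∑ v ∈ good, (if v 0 = 0 then wgt d v else 0) := by
    refine Finset.sum_congr rfl fun v _ => ?_
    rw [if_congr (tf_zero_iff n v) (prod_tf d n v) rfl]
  have hstep2 : (∑ v ∈ good, (if v 0 = 0 then wgt d v else 0))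
      = ∑ v ∈ good.filter (fun v => v 0 = 0), wgt d v := (Finset.sum_filter _ _).symm
  have hstep3 : good.filter (fun v => v 0 = 0) = G n n₁ n₂ 0 := by
    apply Finset.ext
    intro v
    rw [Finset.mem_filter, hgood, Finset.mem_filter, mem_G,
      cnt_tf_one n v, cnt_tf_two n v, tf_last_iff n v]
    constructor
    · rintro ⟨⟨-, hA, hB, hCend⟩, h0⟩
      exact ⟨h0, hA, hB, hCend⟩
    · rintro ⟨h0, hA, hB, hCend⟩
      exact ⟨⟨Finset.mem_univ _, hA, hB, hCend⟩, h0⟩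
  rw [hstep1, hstep2, hstep3, key d n n₁ n₂ 0 hn.symm (by decide), if_pos rfl,
    Cf_eq_rhs d n₁ n₂ hn₁ hn₂]

end
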